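/- Fix an integer N ≥ 2, α ∈ (0,1), λ ∈ [0,1], and suppose κ := ⌈(1-α)N⌉ satisfies κ ≤ N-1. Let V : ℝ^n → (Fin N → ℝ), x̄ ∈ ℝ^n, and g : Fin N → ℝ^n satisfy V_i(x) ≥ V_i(x̄) + ⟨g_i, x - x̄⟩ for all x ∈ ℝ^n and all i. Let σ be a permutation of {1,…,N} with V_{σ(1)}(x̄) ≤ … ≤ V_{σ(N)}(x̄), and define the cut s(x) := Σ_{i=1}^N 𝔮_i · ( V_{σ(i)}(x̄) + ⟨g_{σ(i)}, x - x̄⟩ ). Then s(x̄) = ρ_{λ,α}(V(x̄)) and s(x) ≤ ρ_{λ,α}(V(x)) for all x ∈ ℝ^n; i.e., s is an affine minorant of x ↦ ρ_{λ,α}(V(x)) exact at x̄ (the cut generated in the backward step of the risk averse SDDP algorithm is valid and tight at the trial point). -/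

import Mathlib

/-- Average Value at Risk: `AV@R_α(Z) = inf_u ( u + 1/(αN) Σᵢ max(Zᵢ - u, 0) )`. -/
noncomputable def avar (N : ℕ) (α : ℝ) (Z : Fin N → ℝ) : ℝ :=
  ⨅ u : ℝ, (u + 1 / (α * N) * ∑ i, max (Z i - u) 0)

/-- The risk measure `ρ_{λ,α}(Z) = (1-λ)·(1/N)ΣᵢZᵢ + λ·AV@R_α(Z)`. -/
noncomputable def rho (N : ℕ) (α lam : ℝ) (Z : Fin N → ℝ) : ℝ :=
  (1 - lam) * ((1 / N : ℝ) * ∑ i, Z i) + lam * avar N α Z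

/-- `κ = ⌈(1-α)N⌉`. -/
noncomputable def kap (N : ℕ) (α : ℝ) : ℕ := ⌈(1 - α) * (N : ℝ)⌉₊

/-- The `k`-th order statistic `Z₍ₖ₎` (1-indexed), given a sorting permutation `σ`. -/
noncomputable def sortedVal (N : ℕ) (Z : Fin N → ℝ) (σ : Equiv.Perm (Fin N)) (k : ℕ) : ℝ :=
  if h : k - 1 < N then Z (σ ⟨k - 1, h⟩) else 0

/-- The worst-case weights `𝔮ᵢ` (1-indexed). -/
noncomputable def qw (N : ℕ) (α lam : ℝ) (i : ℕ) : ℝ :=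
  if i < kap N α then (1 - lam) / N
  else if i = kap N α then (1 - lam) / N + lam - lam * ((N : ℝ) - (kap N α : ℝ)) / (α * N)
  else (1 - lam) / N + lam / (α * N)

/-- The dual set `𝔄_α` of densities for `AV@R_α`. -/
def Aalpha (N : ℕ) (α : ℝ) : Set (Fin N → ℝ) :=
  {η | (∀ i, 0 ≤ η i ∧ η i ≤ 1 / α) ∧ (1 / N : ℝ) * ∑ i, η i = 1}

/-- The dual set `𝔄 = (1-λ)·1 + λ·𝔄_α` of densities for `ρ_{λ,α}`. -/
def Aset (N : ℕ) (α lam : ℝ) : Set (Fin N → ℝ) :=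
  {ζ | ∃ η ∈ Aalpha N α, ζ = fun i => (1 - lam) * 1 + lam * η i}

/-- Expectation `E_ζ[Z] = (1/N) Σᵢ ζᵢ Zᵢ` with respect to density `ζ`. -/
noncomputable def Eexp (N : ℕ) (ζ Z : Fin N → ℝ) : ℝ := (1 / N : ℝ) * ∑ i, ζ i * Z i


lemma pt_bound (N : ℕ) (hN : 0 < N) (α : ℝ) (hα : 0 < α) (Z η : Fin N → ℝ)
    (hη : ∀ i, 0 ≤ η i ∧ α * η i ≤ 1) (hsum : ∑ i, η i = N) (u : ℝ) :
    (1/(N:ℝ)) * ∑ i, η i * Z i ≤ u + 1/(α*(N:ℝ)) * ∑ i, max (Z i - u) 0 := by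
  have hN' : (0:ℝ) < N := by exact_mod_cast hN
  have hαN : (0:ℝ) < α * N := by positivity
  have key : ∀ i, α * (η i * (Z i - u)) ≤ max (Z i - u) 0 := by
    intro i
    rcases le_or_gt 0 (Z i - u) with h | h
    · rw [max_eq_left h]
      nlinarith [(hη i).1, (hη i).2, mul_nonneg (mul_nonneg hα.le (hη i).1) h]
    · rw [max_eq_right h.le]
      nlinarith [mul_nonneg hα.le (hη i).1]
  have hsum2 : α * ∑ i, η i * (Z i - u) ≤ ∑ i, max (Z i - u) 0 := by
    rw [Finset.mul_sum]; exact Finset.sum_le_sum fun i _ => key i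
  have h1 : ∑ i, η i * Z i = (∑ i, η i * (Z i - u)) + u * (N:ℝ) := by
    rw [← hsum, Finset.mul_sum, ← Finset.sum_add_distrib]
    exact Finset.sum_congr rfl fun i _ => by ring
  rw [h1]
  have h2 : (1/(N:ℝ)) * ((∑ i, η i * (Z i - u)) + u * N)
      = u + (1/(N:ℝ)) * ∑ i, η i * (Z i - u) := by field_simp; ring
  rw [h2]
  have h3 : (1/(N:ℝ)) * ∑ i, η i * (Z i - u) ≤ 1/(α*N) * ∑ i, max (Z i - u) 0 := by
    rw [div_mul_eq_mul_div, div_mul_eq_mul_div, div_le_div_iff₀ hN' hαN]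
    nlinarith [hsum2, hN'.le]
  linarith

lemma avar_ge (N : ℕ) (hN : 0 < N) (α : ℝ) (hα : 0 < α) (Z η : Fin N → ℝ)
    (hη : ∀ i, 0 ≤ η i ∧ α * η i ≤ 1) (hsum : ∑ i, η i = N) :
    (1/(N:ℝ)) * ∑ i, η i * Z i ≤ avar N α Z :=
  le_ciInf (pt_bound N hN α hα Z η hη hsum)

lemma avar_le (N : ℕ) (hN : 0 < N) (α : ℝ) (hα : 0 < α) (hα1 : α ≤ 1) (Z : Fin N → ℝ) (u : ℝ) :
    avar N α Z ≤ u + 1/(α*(N:ℝ)) * ∑ i, max (Z i - u) 0 := by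
  refine ciInf_le ⟨(1/(N:ℝ)) * ∑ i, Z i, ?_⟩ u
  rintro y ⟨v, rfl⟩
  have := pt_bound N hN α hα Z (fun _ => 1)
    (fun i => ⟨zero_le_one, by simpa using hα1⟩) (by simp) v
  simpa using this

noncomputable def etap (N K : ℕ) (α : ℝ) (i : ℕ) : ℝ :=
  if i + 1 < K then 0 else if i + 1 = K then (N:ℝ) - ((N:ℝ)-(K:ℝ))/α else 1/α

lemma qw_eq (N : ℕ) (hN : 0 < N) (α lam : ℝ) (hα : α ≠ 0) (m : ℕ) :
    qw N α lam (m+1) = (1-lam)/(N:ℝ) + lam * etap N (kap N α) α m / N := by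
  have hN' : (N:ℝ) ≠ 0 := Nat.cast_ne_zero.mpr hN.ne'
  unfold qw etap
  split_ifs <;> field_simp <;> ring

lemma etap_sum (N : ℕ) (α : ℝ) (hα : α ≠ 0) (K : ℕ) (hK1 : 1 ≤ K) (hKN : K ≤ N) :
    ∑ i : Fin N, etap N K α i.1 = N := by
  rw [Fin.sum_univ_eq_sum_range (fun i => etap N K α i) N]
  rw [Finset.range_eq_Ico, ← Finset.sum_Ico_consecutive _ (Nat.zero_le K) hKN]
  have hA : ∑ i ∈ Finset.Ico 0 K, etap N K α i = (N:ℝ) - ((N:ℝ)-(K:ℝ))/α := by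
    rw [← Finset.range_eq_Ico]
    obtain ⟨K', rfl⟩ : ∃ K', K = K' + 1 := ⟨K - 1, by omega⟩
    rw [Finset.sum_range_succ]
    have h0 : ∑ i ∈ Finset.range K', etap N (K'+1) α i = 0 :=
      Finset.sum_eq_zero fun i hi => by
        unfold etap; rw [if_pos (Nat.succ_lt_succ (Finset.mem_range.mp hi))]
    rw [h0]; unfold etap; simp
  have hB : ∑ i ∈ Finset.Ico K N, etap N K α i = ((N:ℝ)-(K:ℝ))/α := by
    have hc : ∀ i ∈ Finset.Ico K N, etap N K α i = 1/α := by
      intro i hi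
      have := (Finset.mem_Ico.mp hi).1
      unfold etap
      rw [if_neg (by omega), if_neg (by omega)]
    rw [Finset.sum_congr rfl hc, Finset.sum_const, Nat.card_Ico, nsmul_eq_mul,
      Nat.cast_sub hKN]
    ring
  rw [hA, hB]; ring

/-- validity and tightness of the SDDP cut. If `κ = ⌈(1-α)N⌉ ≤ N-1`,
`gᵢ` is a subgradient of `Vᵢ` at `x̄`, and `σ` sorts the values `V_{σ(1)}(x̄) ≤ … ≤ V_{σ(N)}(x̄)`,
then the cut `s(x) = Σᵢ 𝔮ᵢ (V_{σ(i)}(x̄) + ⟨g_{σ(i)}, x - x̄⟩)` satisfies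
`s(x̄) = ρ_{λ,α}(V(x̄))` and `s(x) ≤ ρ_{λ,α}(V(x))` for all `x`. -/
theorem sddp_cut_valid_and_tight (n N : ℕ) (hN : 2 ≤ N) (α lam : ℝ)
    (hα0 : 0 < α) (hα1 : α < 1) (hlam0 : 0 ≤ lam) (hlam1 : lam ≤ 1)
    (hκ : kap N α ≤ N - 1)
    (V : EuclideanSpace ℝ (Fin n) → Fin N → ℝ)
    (xb : EuclideanSpace ℝ (Fin n)) (g : Fin N → EuclideanSpace ℝ (Fin n))
    (hsub : ∀ (x : EuclideanSpace ℝ (Fin n)) (i : Fin N),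
      V xb i + (inner ℝ (g i) (x - xb) : ℝ) ≤ V x i)
    (σ : Equiv.Perm (Fin N)) (hσ : Monotone fun i => V xb (σ i)) :
    (∑ i : Fin N, qw N α lam (i.1 + 1) * (V xb (σ i) + (inner ℝ (g (σ i)) (xb - xb) : ℝ)))
        = rho N α lam (V xb) ∧
    ∀ x : EuclideanSpace ℝ (Fin n),
      (∑ i : Fin N, qw N α lam (i.1 + 1) * (V xb (σ i) + (inner ℝ (g (σ i)) (x - xb) : ℝ)))
        ≤ rho N α lam (V x) := by
  have hN0 : 0 < N := by omega
  have hN' : (0:ℝ) < N := by exact_mod_cast hN0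
  set K := kap N α with hKdef
  have hK1 : 1 ≤ K := by
    have : 0 < (1 - α) * (N:ℝ) := by nlinarith
    exact Nat.ceil_pos.mpr this
  have hKltN : K < N := by omega
  have hceil_lo : (1 - α) * (N:ℝ) ≤ (K:ℝ) := Nat.le_ceil _
  have hceil_hi : (K:ℝ) < (1 - α) * (N:ℝ) + 1 :=
    Nat.ceil_lt_add_one (by nlinarith)
  -- bounds on etap
  have hηb : ∀ i : ℕ, 0 ≤ etap N K α i ∧ α * etap N K α i ≤ 1 := by
    intro i
    unfold etap
    split_ifs with h1 h2
    · constructor <;> norm_num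
    · constructor
      · rw [sub_nonneg, div_le_iff₀ hα0]; nlinarith
      · have hc : α * (((N:ℝ) - (K:ℝ))/α) = (N:ℝ) - (K:ℝ) :=
          mul_div_cancel₀ _ hα0.ne'
        nlinarith
    · constructor
      · positivity
      · rw [mul_one_div, div_self hα0.ne']
  -- the dual density
  set η : Fin N → ℝ := fun j => etap N K α ((σ.symm j).1) with hηdef
  have hησ : ∀ i : Fin N, η (σ i) = etap N K α i.1 := by
    intro i; simp [hηdef]
  have hsumη : ∑ j, η j = (N:ℝ) := by
    have := Equiv.sum_comp σ.symm (fun i : Fin N => etap N K α i.1)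
    calc ∑ j, η j = ∑ i : Fin N, etap N K α i.1 := this
      _ = N := etap_sum N α hα0.ne' K hK1 hKltN.le
  have hηb' : ∀ j : Fin N, 0 ≤ η j ∧ α * η j ≤ 1 := fun j => hηb _
  -- expression of the cut sum
  have hS : ∀ W : Fin N → ℝ, ∑ i : Fin N, qw N α lam (i.1 + 1) * W (σ i)
      = (1 - lam) * ((1/(N:ℝ)) * ∑ j, W j) + lam * ((1/(N:ℝ)) * ∑ j, η j * W j) := by
    intro W
    have e1 : ∑ j, W j = ∑ i, W (σ i) := (Equiv.sum_comp σ W).symm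
    have e2 : ∑ j, η j * W j = ∑ i : Fin N, etap N K α i.1 * W (σ i) := by
      rw [← Equiv.sum_comp σ (fun j => η j * W j)]
      exact Finset.sum_congr rfl fun i _ => by rw [hησ]
    rw [e1, e2, Finset.mul_sum, Finset.mul_sum, Finset.mul_sum, Finset.mul_sum,
      ← Finset.sum_add_distrib]
    refine Finset.sum_congr rfl fun i _ => ?_
    rw [qw_eq N hN0 α lam hα0.ne' i.1]
    ring
  have hqnn : ∀ i : Fin N, 0 ≤ qw N α lam (i.1 + 1) := by
    intro i
    rw [qw_eq N hN0 α lam hα0.ne' i.1]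
    exact add_nonneg (div_nonneg (by linarith) hN'.le)
      (div_nonneg (mul_nonneg hlam0 (hηb i.1).1) hN'.le)
  -- tightness: avar (V xb) equals the dual expectation
  set Z : Fin N → ℝ := V xb with hZdef
  have hltN : K - 1 < N := by omega
  set ust : ℝ := Z (σ ⟨K - 1, hltN⟩) with hust
  have hpt : ∀ i : Fin N, etap N K α i.1 * Z (σ i)
      = etap N K α i.1 * ust + (1/α) * max (Z (σ i) - ust) 0 := by
    intro i
    rcases lt_trichotomy (i.1 + 1) K with h | h | h
    · have hle : Z (σ i) ≤ ust := hσ (show i ≤ ⟨K - 1, hltN⟩ by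
        rw [Fin.le_def]; simp; omega)
      have hmax : max (Z (σ i) - ust) 0 = 0 := max_eq_right (by linarith)
      unfold etap
      rw [if_pos h, hmax]
      ring
    · have hi : i = ⟨K - 1, hltN⟩ := Fin.ext (by simp; omega)
      rw [hi]
      simp [hust]
    · have hle : ust ≤ Z (σ i) := hσ (show (⟨K - 1, hltN⟩ : Fin N) ≤ i by
        rw [Fin.le_def]; simp; omega)
      have hmax : max (Z (σ i) - ust) 0 = Z (σ i) - ust := max_eq_left (by linarith)
      unfold etap
      rw [if_neg (by omega), if_neg (by omega), hmax]
      ring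
  have hEe : ∑ j, η j * Z j = (N:ℝ) * ust + (1/α) * ∑ j, max (Z j - ust) 0 := by
    have e2 : ∑ j, η j * Z j = ∑ i : Fin N, etap N K α i.1 * Z (σ i) := by
      rw [← Equiv.sum_comp σ (fun j => η j * Z j)]
      exact Finset.sum_congr rfl fun i _ => by rw [hησ]
    have e3 : ∑ j, max (Z j - ust) 0 = ∑ i, max (Z (σ i) - ust) 0 :=
      (Equiv.sum_comp σ (fun j => max (Z j - ust) 0)).symm
    rw [e2, e3, Finset.sum_congr rfl fun i _ => hpt i, Finset.sum_add_distrib,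
      ← Finset.mul_sum, ← Finset.sum_mul, etap_sum N α hα0.ne' K hK1 hKltN.le]
  have havar : avar N α Z = (1/(N:ℝ)) * ∑ j, η j * Z j := by
    refine le_antisymm ?_ (avar_ge N hN0 α hα0 Z η hηb' hsumη)
    have h1 := avar_le N hN0 α hα0 hα1.le Z ust
    have h2 : ust + 1/(α*(N:ℝ)) * ∑ j, max (Z j - ust) 0
        = (1/(N:ℝ)) * ∑ j, η j * Z j := by
      rw [hEe]; field_simp
    linarith
  constructor
  · have hz : ∀ i : Fin N, (inner ℝ (g (σ i)) (xb - xb) : ℝ) = 0 := by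
      intro i; simp
    calc ∑ i : Fin N, qw N α lam (i.1 + 1) * (Z (σ i) + (inner ℝ (g (σ i)) (xb - xb) : ℝ))
        = ∑ i : Fin N, qw N α lam (i.1 + 1) * Z (σ i) := by
          refine Finset.sum_congr rfl fun i _ => ?_; rw [hz i, add_zero]
      _ = (1 - lam) * ((1/(N:ℝ)) * ∑ j, Z j) + lam * ((1/(N:ℝ)) * ∑ j, η j * Z j) := hS Z
      _ = rho N α lam Z := by rw [rho, havar]
  · intro x
    calc ∑ i : Fin N, qw N α lam (i.1 + 1) * (Z (σ i) + (inner ℝ (g (σ i)) (x - xb) : ℝ))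
        ≤ ∑ i : Fin N, qw N α lam (i.1 + 1) * V x (σ i) :=
          Finset.sum_le_sum fun i _ =>
            mul_le_mul_of_nonneg_left (hsub x (σ i)) (hqnn i)
      _ = (1 - lam) * ((1/(N:ℝ)) * ∑ j, V x j)
            + lam * ((1/(N:ℝ)) * ∑ j, η j * V x j) := hS (V x)
      _ ≤ rho N α lam (V x) := by
          rw [rho]
          exact add_le_add_right (mul_le_mul_of_nonneg_left
            (avar_ge N hN0 α hα0 (V x) η hηb' hsumη) hlam0) _
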